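/- Let E be a cycle graph with vertices u_1, …, u_n and edges f_1, …, f_n where s(f_i) = u_i, r(f_i) = u_{i+1} for i < n and r(f_n) = u_1, and let c_i = f_i ⋯ f_n f_1 ⋯ f_{i-1} be the closed path based at u_i traversing the cycle once. Then the center of the path algebra KE equals { Σ_{i=1}^n p(c_i) : p(x) ∈ K[x] }, and the map sending Σ_{i=1}^n p(c_i) to p is a K-algebra isomorphism from Z(KE) onto the polynomial algebra K[x]. -/

import Mathlib

/-! Basic infrastructure: directed graphs and their path algebras.

The path algebra `KE` is realized as the non-unital subalgebra generated by the
(images of the) vertices and edges inside the unital algebra `PA K E`, which is the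
quotient of the free algebra on vertices and edges by the usual path-algebra
relations (vertices are orthogonal idempotents acting as local units on edges).
Words of composable edges are exactly the paths, so `KE` has the paths as a basis. -/

/-- A directed graph `E = (E⁰, E¹, s, r)`. -/
structure DirGraph : Type 1 where
  V : Type
  Edge : Type
  s : Edge → V
  r : Edge → V

/-- A (non-unital, possibly non-closed) subset `S` of an algebra is *prime* if it is nonzero
and `a S b = 0` implies `a = 0` or `b = 0` for `a, b ∈ S`. -/
def IsPrimeSet {A : Type} [NonUnitalNonAssocSemiring A] (S : Set A) : Prop :=
  (∃ a ∈ S, a ≠ 0) ∧ ∀ a ∈ S, ∀ b ∈ S, (∀ x ∈ S, a * x * b = 0) → a = 0 ∨ b = 0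

/-- `J` is a two-sided ideal of the (possibly non-unital) subalgebra with carrier `S`. -/
def IsIdealOf (K : Type) [Field K] {A : Type} [Ring A] [Algebra K A] (S J : Set A) : Prop :=
  J ⊆ S ∧ (0 : A) ∈ J ∧ (∀ x ∈ J, ∀ y ∈ J, x + y ∈ J) ∧
    (∀ k : K, ∀ x ∈ J, k • x ∈ J) ∧ (∀ a ∈ S, ∀ x ∈ J, a * x ∈ J ∧ x * a ∈ J)

namespace DirGraph

/-- Generators of the path algebra: vertices and edges. -/
abbrev Gen (E : DirGraph) : Type := E.V ⊕ E.Edge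

variable (K : Type) [Field K] (E : DirGraph)

/-- The defining relations of the path algebra: vertices are orthogonal idempotents,
`s(e)·e = e`, `e·r(e) = e`, and all other vertex-edge products vanish. -/
inductive PathRel : FreeAlgebra K E.Gen → FreeAlgebra K E.Gen → Prop
  | vv_eq (u : E.V) :
      PathRel (FreeAlgebra.ι K (Sum.inl u) * FreeAlgebra.ι K (Sum.inl u))
        (FreeAlgebra.ι K (Sum.inl u))
  | vv_ne (u v : E.V) : u ≠ v →
      PathRel (FreeAlgebra.ι K (Sum.inl u) * FreeAlgebra.ι K (Sum.inl v)) 0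
  | ve_eq (e : E.Edge) :
      PathRel (FreeAlgebra.ι K (Sum.inl (E.s e)) * FreeAlgebra.ι K (Sum.inr e))
        (FreeAlgebra.ι K (Sum.inr e))
  | ve_ne (u : E.V) (e : E.Edge) : E.s e ≠ u →
      PathRel (FreeAlgebra.ι K (Sum.inl u) * FreeAlgebra.ι K (Sum.inr e)) 0
  | ev_eq (e : E.Edge) :
      PathRel (FreeAlgebra.ι K (Sum.inr e) * FreeAlgebra.ι K (Sum.inl (E.r e)))
        (FreeAlgebra.ι K (Sum.inr e))
  | ev_ne (e : E.Edge) (u : E.V) : E.r e ≠ u →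
      PathRel (FreeAlgebra.ι K (Sum.inr e) * FreeAlgebra.ι K (Sum.inl u)) 0

/-- The ambient unital algebra (the unitalization of the path algebra). -/
abbrev PA : Type := RingQuot (E.PathRel K)

/-- The image of a vertex in the path algebra. -/
noncomputable def vtx (u : E.V) : E.PA K :=
  RingQuot.mkAlgHom K (E.PathRel K) (FreeAlgebra.ι K (Sum.inl u))

/-- The image of an edge in the path algebra. -/
noncomputable def edg (e : E.Edge) : E.PA K :=
  RingQuot.mkAlgHom K (E.PathRel K) (FreeAlgebra.ι K (Sum.inr e))

/-- The path algebra `KE`: the (non-unital) subalgebra spanned by all paths, i.e.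
generated by the vertices and edges. -/
noncomputable def KE : NonUnitalSubalgebra K (E.PA K) :=
  NonUnitalAlgebra.adjoin K (Set.range (E.vtx K) ∪ Set.range (E.edg K))

/-- The center `Z(KE)` of the path algebra. -/
def relCenter : Set (E.PA K) :=
  {z | z ∈ E.KE K ∧ ∀ a ∈ E.KE K, a * z = z * a}

/-- `E.IsPathFrom u v l` : the list of edges `l` is a path from `u` to `v`
(`l = []` is the trivial path at `u = v`). -/
def IsPathFrom : E.V → E.V → List E.Edge → Prop
  | u, v, [] => u = v
  | u, v, e :: l => E.s e = u ∧ IsPathFrom (E.r e) v l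

/-- The element of the path algebra corresponding to the path starting at `u`
with list of edges `l` (for `l = []` this is the vertex `u` itself). -/
noncomputable def pathElem (u : E.V) (l : List E.Edge) : E.PA K :=
  E.vtx K u * (l.map (E.edg K)).prod

/-- The sum of all vertices: the unit of `KE` when `E⁰` is finite. -/
noncomputable def unitKE : E.PA K := ∑ᶠ u : E.V, E.vtx K u

/-- The scalar multiples `K·1` of the unit of `KE`. -/
noncomputable def scalarSet : Set (E.PA K) := Set.range fun k : K => k • E.unitKE K

/-- One step in the underlying undirected graph. -/
def Step (u v : E.V) : Prop :=
  (∃ e : E.Edge, E.s e = u ∧ E.r e = v) ∨ (∃ e : E.Edge, E.s e = v ∧ E.r e = u)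

/-- `u ∼ v` : the vertices `u` and `v` are connected in the underlying undirected graph. -/
def Connected (u v : E.V) : Prop := Relation.ReflTransGen E.Step u v

/-- The graph `E` is connected. -/
def IsConnectedGraph : Prop := ∀ u v : E.V, E.Connected u v

/-- The graph `E` is a cycle: `n ≥ 1` vertices `u₁, …, uₙ` and `n` edges `f₁, …, fₙ` with
`s(fᵢ) = uᵢ`, `r(fᵢ) = uᵢ₊₁` (indices mod `n`). -/
def IsCycleGraph : Prop :=
  ∃ n : ℕ, ∃ hn : 0 < n, ∃ (hv : Fin n ≃ E.V) (he : Fin n ≃ E.Edge),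
    ∀ i : Fin n, E.s (he i) = hv i ∧ E.r (he i) = hv ⟨(i.1 + 1) % n, Nat.mod_lt _ hn⟩

end DirGraph

/-- The cycle graph with `n` vertices `0, 1, …, n-1` and edges `fᵢ : i → i+1 (mod n)`. -/
def cycGraph (n : ℕ) [NeZero n] : DirGraph where
  V := Fin n
  Edge := Fin n
  s := id
  r := fun i => i + 1

/-- The closed path `cᵢ = fᵢ f_{i+1} ⋯ f_{i+n-1}` based at the vertex `i`,
traversing the cycle once, as an element of the path algebra. -/
noncomputable def cycElem (K : Type) [Field K] (n : ℕ) [NeZero n] (i : Fin n) :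
    (cycGraph n).PA K :=
  (cycGraph n).pathElem K i (List.ofFn fun j : Fin n => i + j)

open Fin.NatCast Fin.CommRing

namespace Stmt8
open DirGraph

variable {K : Type} [Field K] {n : ℕ} [NeZero n]

/-- vertex element -/
noncomputable def vt (K : Type) [Field K] {n : ℕ} [NeZero n] (i : Fin n) :
    (cycGraph n).PA K := (cycGraph n).vtx K i

/-- edge element -/
noncomputable def ed (K : Type) [Field K] {n : ℕ} [NeZero n] (i : Fin n) :
    (cycGraph n).PA K := (cycGraph n).edg K i

lemma vt_mul_vt (u v : Fin n) :
    vt K u * vt K v = if u = v then vt K u else 0 := by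
  unfold vt DirGraph.vtx
  rw [← map_mul]
  split_ifs with h
  · subst h
    exact RingQuot.mkAlgHom_rel K (DirGraph.PathRel.vv_eq (K := K) (E := cycGraph n) u)
  · rw [RingQuot.mkAlgHom_rel K (DirGraph.PathRel.vv_ne (K := K) (E := cycGraph n) u v h), map_zero]

lemma vt_mul_ed (u e : Fin n) :
    vt K u * ed K e = if u = e then ed K e else 0 := by
  unfold vt ed DirGraph.vtx DirGraph.edg
  rw [← map_mul]
  split_ifs with h
  · subst h
    exact RingQuot.mkAlgHom_rel K (DirGraph.PathRel.ve_eq (K := K) (E := cycGraph n) u)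
  · rw [RingQuot.mkAlgHom_rel K
      (DirGraph.PathRel.ve_ne (K := K) (E := cycGraph n) u e (Ne.symm h)), map_zero]

lemma ed_mul_vt (e u : Fin n) :
    ed K e * vt K u = if u = e + 1 then ed K e else 0 := by
  unfold vt ed DirGraph.vtx DirGraph.edg
  rw [← map_mul]
  split_ifs with h
  · subst h
    exact RingQuot.mkAlgHom_rel K (DirGraph.PathRel.ev_eq (K := K) (E := cycGraph n) e)
  · rw [RingQuot.mkAlgHom_rel K
      (DirGraph.PathRel.ev_ne (K := K) (E := cycGraph n) e u (Ne.symm h)), map_zero]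

/-- the path of length `ℓ` starting at `i` -/
noncomputable def ch (K : Type) [Field K] {n : ℕ} [NeZero n] (i : Fin n) :
    ℕ → (cycGraph n).PA K
  | 0 => vt K i
  | ℓ + 1 => ed K i * ch K (i + 1) ℓ

@[simp] lemma ch_zero (i : Fin n) : ch K i 0 = vt K i := rfl
lemma ch_succ (i : Fin n) (ℓ : ℕ) : ch K i (ℓ + 1) = ed K i * ch K (i + 1) ℓ := rfl

lemma vt_mul_ch (u i : Fin n) (ℓ : ℕ) :
    vt K u * ch K i ℓ = if u = i then ch K i ℓ else 0 := by
  cases ℓ with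
  | zero => rw [ch_zero, vt_mul_vt]; split_ifs with h; · subst h; rfl
            · rfl
  | succ ℓ =>
    rw [ch_succ, ← mul_assoc, vt_mul_ed]
    split_ifs with h
    · rfl
    · rw [zero_mul]

lemma ch_mul_vt (i : Fin n) (ℓ : ℕ) (u : Fin n) :
    ch K i ℓ * vt K u = if u = i + (ℓ : Fin n) then ch K i ℓ else 0 := by
  induction ℓ generalizing i with
  | zero =>
    rw [ch_zero, vt_mul_vt, Nat.cast_zero, add_zero]
    split_ifs with h1 h2 h2
    · subst h1; rfl
    · exact absurd h1.symm h2
    · exact absurd h2.symm h1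
    · rfl
  | succ ℓ ih =>
    rw [ch_succ, mul_assoc, ih]
    have hc : ((ℓ + 1 : ℕ) : Fin n) = (ℓ : Fin n) + 1 := by push_cast; ring
    rw [hc]
    by_cases h : u = i + ((ℓ : Fin n) + 1)
    · have h2 : u = (i + 1) + (ℓ : Fin n) := by rw [h]; ring
      rw [if_pos h2, if_pos h]
    · have h2 : ¬ u = (i + 1) + (ℓ : Fin n) := fun hu => h (by rw [hu]; ring)
      rw [if_neg h2, if_neg h, mul_zero]

lemma ch_mul_ch (i : Fin n) (ℓ : ℕ) (j : Fin n) (m : ℕ) :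
    ch K i ℓ * ch K j m = if j = i + (ℓ : Fin n) then ch K i (ℓ + m) else 0 := by
  induction ℓ generalizing i with
  | zero =>
    rw [ch_zero, vt_mul_ch, Nat.cast_zero, add_zero, zero_add]
    by_cases h : j = i
    · subst h; rw [if_pos rfl]
    · rw [if_neg fun hh => h hh.symm, if_neg h]
  | succ ℓ ih =>
    rw [ch_succ, mul_assoc, ih]
    have hc : ((ℓ + 1 : ℕ) : Fin n) = (ℓ : Fin n) + 1 := by push_cast; ring
    rw [hc]
    by_cases h : j = i + ((ℓ : Fin n) + 1)
    · have h2 : j = (i + 1) + (ℓ : Fin n) := by rw [h]; ring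
      have h3 : ℓ + 1 + m = (ℓ + m) + 1 := by ring
      rw [if_pos h2, if_pos h, h3]; rfl
    · have h2 : ¬ j = (i + 1) + (ℓ : Fin n) := fun hu => h (by rw [hu]; ring)
      rw [if_neg h2, if_neg h, mul_zero]

lemma ch_one (i : Fin n) : ch K i 1 = ed K i := by
  rw [ch_succ, ch_zero, ed_mul_vt, if_pos rfl]

lemma ed_mul_ch (j i : Fin n) (ℓ : ℕ) :
    ed K j * ch K i ℓ = if i = j + 1 then ch K j (ℓ + 1) else 0 := by
  rw [← ch_one, ch_mul_ch, Nat.cast_one, add_comm 1 ℓ]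

lemma ch_mul_ed (i : Fin n) (ℓ : ℕ) (j : Fin n) :
    ch K i ℓ * ed K j = if j = i + (ℓ : Fin n) then ch K i (ℓ + 1) else 0 := by
  rw [← ch_one, ch_mul_ch]

end Stmt8
namespace Stmt8
variable {K : Type} [Field K] {n : ℕ} [NeZero n]

lemma vt_mul_ofFn (ℓ : ℕ) (i : Fin n) :
    vt K i * ((List.ofFn fun j : Fin ℓ => i + ((j : ℕ) : Fin n)).map
      ((cycGraph n).edg K)).prod = ch K i ℓ := by
  induction ℓ generalizing i with
  | zero => simp; exact mul_one _
  | succ ℓ ih =>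
    rw [List.ofFn_succ]
    have h0 : i + (((0 : Fin (ℓ+1)) : ℕ) : Fin n) = i := by
      simp
    have h1 : (fun j : Fin ℓ => i + (((j.succ : Fin (ℓ+1)) : ℕ) : Fin n)) =
        (fun j : Fin ℓ => (i + 1) + ((j : ℕ) : Fin n)) := by
      funext j
      have : ((j.succ : Fin (ℓ+1)) : ℕ) = (j : ℕ) + 1 := rfl
      rw [this]; push_cast; ring
    erw [List.map_cons, List.prod_cons, h0, h1, ← mul_assoc]
    have h2 : vt K i * (cycGraph n).edg K i = ed K i := by
      have := vt_mul_ed (K := K) i i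
      rw [if_pos rfl] at this
      exact this
    have h3 : ed K i = ed K i * vt K (i + 1) := by
      rw [ed_mul_vt, if_pos rfl]
    rw [h2, h3, mul_assoc, ih, ← ch_succ]

lemma cycElem_eq (i : Fin n) : cycElem K n i = ch K i n := by
  erw [cycElem, DirGraph.pathElem]
  have : (List.ofFn fun j : Fin n => i + j) =
      (List.ofFn fun j : Fin n => i + ((j : ℕ) : Fin n)) := by
    congr 1; funext j; rw [Fin.cast_val_eq_self]
  erw [this]
  exact vt_mul_ofFn n i

lemma natCast_mul_self (m : ℕ) : ((m * n : ℕ) : Fin n) = 0 := by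
  rw [Fin.natCast_eq_zero]; exact dvd_mul_left n m

lemma cyc_pow_succ (i : Fin n) (m : ℕ) :
    cycElem K n i ^ (m + 1) = ch K i ((m + 1) * n) := by
  induction m with
  | zero => rw [pow_one, cycElem_eq]; norm_num
  | succ m ih =>
    rw [pow_succ, ih, cycElem_eq, ch_mul_ch, natCast_mul_self, add_zero, if_pos rfl]
    congr 1
    ring

lemma vt_mul_cyc_pow (i : Fin n) (m : ℕ) :
    vt K i * cycElem K n i ^ m = ch K i (m * n) := by
  cases m with
  | zero => rw [pow_zero, mul_one, Nat.zero_mul, ch_zero]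
  | succ m => rw [cyc_pow_succ, vt_mul_ch, if_pos rfl]

lemma cyc_pow_mul_vt (i : Fin n) (m : ℕ) :
    cycElem K n i ^ m * vt K i = ch K i (m * n) := by
  cases m with
  | zero => rw [pow_zero, one_mul, Nat.zero_mul, ch_zero]
  | succ m => rw [cyc_pow_succ, ch_mul_vt, natCast_mul_self, add_zero, if_pos rfl]

lemma ed_mul_cyc_pow (j : Fin n) (m : ℕ) :
    ed K j * cycElem K n (j + 1) ^ m = cycElem K n j ^ m * ed K j := by
  cases m with
  | zero => rw [pow_zero, pow_zero, mul_one, one_mul]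
  | succ m =>
    rw [cyc_pow_succ, cyc_pow_succ, ed_mul_ch, if_pos rfl, ch_mul_ed,
      natCast_mul_self, add_zero, if_pos rfl]

lemma vt_mem : vt K (n := n) i ∈ (cycGraph n).KE K := by
  apply NonUnitalAlgebra.subset_adjoin
  exact Set.mem_union_left _ ⟨i, rfl⟩

lemma ed_mem : ed K (n := n) i ∈ (cycGraph n).KE K := by
  apply NonUnitalAlgebra.subset_adjoin
  exact Set.mem_union_right _ ⟨i, rfl⟩

lemma ch_mem (i : Fin n) (ℓ : ℕ) : ch K i ℓ ∈ (cycGraph n).KE K := by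
  induction ℓ generalizing i with
  | zero => exact vt_mem
  | succ ℓ ih => exact mul_mem ed_mem (ih (i + 1))

end Stmt8
namespace Stmt8
variable {K : Type} [Field K] {n : ℕ} [NeZero n]

/-- the K-vector space with basis `{1} ∪ {paths}` -/
abbrev W (K : Type) [Field K] (n : ℕ) : Type := Option (Fin n × ℕ) →₀ K

/-- action of a vertex on basis vectors -/
noncomputable def vAct (u : Fin n) : Option (Fin n × ℕ) → W K n
  | none => Finsupp.single (some (u, 0)) 1
  | some (i, ℓ) => if u = i then Finsupp.single (some (i, ℓ)) 1 else 0

/-- action of an edge on basis vectors -/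
noncomputable def eAct (e : Fin n) : Option (Fin n × ℕ) → W K n
  | none => Finsupp.single (some (e, 1)) 1
  | some (i, ℓ) => if i = e + 1 then Finsupp.single (some (e, ℓ + 1)) 1 else 0

noncomputable def Vend (u : Fin n) : Module.End K (W K n) :=
  Finsupp.lsum ℕ fun o => LinearMap.toSpanSingleton K (W K n) (vAct u o)

noncomputable def Eend (e : Fin n) : Module.End K (W K n) :=
  Finsupp.lsum ℕ fun o => LinearMap.toSpanSingleton K (W K n) (eAct e o)

@[simp] lemma Vend_single (u : Fin n) (o : Option (Fin n × ℕ)) (k : K) :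
    Vend u (Finsupp.single o k) = k • vAct u o := by
  rw [Vend, Finsupp.lsum_single, LinearMap.toSpanSingleton_apply]

@[simp] lemma Eend_single (e : Fin n) (o : Option (Fin n × ℕ)) (k : K) :
    Eend e (Finsupp.single o k) = k • eAct e o := by
  rw [Eend, Finsupp.lsum_single, LinearMap.toSpanSingleton_apply]

lemma VV_eq (u : Fin n) : Vend (K := K) u * Vend u = Vend u := by
  apply Finsupp.lhom_ext
  intro o k
  rw [Module.End.mul_apply, Vend_single, map_smul]
  match o with
  | none => simp [vAct]
  | some (i, ℓ) => by_cases h : u = i <;> simp [vAct, h]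

lemma VV_ne (u v : Fin n) (huv : u ≠ v) : Vend (K := K) u * Vend v = 0 := by
  apply Finsupp.lhom_ext
  intro o k
  rw [Module.End.mul_apply, Vend_single, map_smul]
  match o with
  | none => simp [vAct, huv]
  | some (i, ℓ) =>
    by_cases h : v = i
    · subst h; simp [vAct, huv]
    · simp [vAct, h]

lemma VE_eq (e : Fin n) : Vend (K := K) e * Eend e = Eend e := by
  apply Finsupp.lhom_ext
  intro o k
  rw [Module.End.mul_apply, Eend_single, map_smul]
  match o with
  | none => simp [vAct, eAct]
  | some (i, ℓ) => by_cases h : i = e + 1 <;> simp [vAct, eAct, h]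

lemma VE_ne (u e : Fin n) (hu : e ≠ u) : Vend (K := K) u * Eend e = 0 := by
  apply Finsupp.lhom_ext
  intro o k
  rw [Module.End.mul_apply, Eend_single, map_smul]
  match o with
  | none => simp [vAct, eAct, Ne.symm hu]
  | some (i, ℓ) => by_cases h : i = e + 1 <;> simp [vAct, eAct, h, Ne.symm hu]

lemma EV_eq (e : Fin n) : Eend (K := K) e * Vend (e + 1) = Eend e := by
  apply Finsupp.lhom_ext
  intro o k
  rw [Module.End.mul_apply, Vend_single, map_smul]
  match o with
  | none => simp [vAct, eAct]
  | some (i, ℓ) =>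
    by_cases h : (e + 1 : Fin n) = i
    · subst h; simp [vAct, eAct]
    · have h' : ¬ i = e + 1 := fun hh => h hh.symm
      simp [vAct, eAct, h, h']

lemma EV_ne (e u : Fin n) (hu : e + 1 ≠ u) : Eend (K := K) e * Vend u = 0 := by
  apply Finsupp.lhom_ext
  intro o k
  rw [Module.End.mul_apply, Vend_single, map_smul]
  have h' : ¬ u = e + 1 := fun hh => hu hh.symm
  match o with
  | none => simp [vAct, eAct, h']
  | some (i, ℓ) =>
    by_cases h : u = i
    · subst h; simp [vAct, eAct, h']
    · simp [vAct, h]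

noncomputable def gend : (cycGraph n).Gen → Module.End K (W K n) :=
  Sum.elim Vend Eend

noncomputable def ρfree : FreeAlgebra K (cycGraph n).Gen →ₐ[K] Module.End K (W K n) :=
  FreeAlgebra.lift K gend

lemma rel_resp : ∀ ⦃x y : FreeAlgebra K (cycGraph n).Gen⦄,
    (cycGraph n).PathRel K x y → ρfree x = ρfree y := by
  intro x y h
  induction h with
  | vv_eq u =>
    simp only [map_mul, ρfree, FreeAlgebra.lift_ι_apply]
    exact VV_eq u
  | vv_ne u v huv =>
    simp only [map_mul, map_zero, ρfree, FreeAlgebra.lift_ι_apply]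
    exact VV_ne u v huv
  | ve_eq e =>
    simp only [map_mul, ρfree, FreeAlgebra.lift_ι_apply]
    show Vend ((cycGraph n).s e) * Eend e = Eend e
    exact VE_eq e
  | ve_ne u e hu =>
    simp only [map_mul, map_zero, ρfree, FreeAlgebra.lift_ι_apply]
    show Vend u * Eend e = 0
    exact VE_ne u e hu
  | ev_eq e =>
    simp only [map_mul, ρfree, FreeAlgebra.lift_ι_apply]
    show Eend e * Vend ((cycGraph n).r e) = Eend e
    exact EV_eq e
  | ev_ne e u hu =>
    simp only [map_mul, map_zero, ρfree, FreeAlgebra.lift_ι_apply]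
    show Eend e * Vend u = 0
    exact EV_ne e u hu

noncomputable def ρ : (cycGraph n).PA K →ₐ[K] Module.End K (W K n) :=
  RingQuot.liftAlgHom K ⟨ρfree, rel_resp⟩

lemma ρ_vt (u : Fin n) : ρ (vt K u) = Vend u := by
  erw [vt, DirGraph.vtx, ρ, RingQuot.liftAlgHom_mkAlgHom_apply, ρfree,
    FreeAlgebra.lift_ι_apply]
  rfl

lemma ρ_ed (e : Fin n) : ρ (ed K e) = Eend e := by
  erw [ed, DirGraph.edg, ρ, RingQuot.liftAlgHom_mkAlgHom_apply, ρfree,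
    FreeAlgebra.lift_ι_apply]
  rfl

/-- coordinates with respect to the path basis -/
noncomputable def T : (cycGraph n).PA K →ₗ[K] W K n where
  toFun x := ρ x (Finsupp.single none 1)
  map_add' x y := by simp [map_add]
  map_smul' k x := by simp [map_smul]

lemma T_mul (x y : (cycGraph n).PA K) : T (x * y) = ρ x (T y) := by
  show ρ (x * y) _ = _
  rw [map_mul]
  rfl

@[simp] lemma T_one : T (1 : (cycGraph n).PA K) = Finsupp.single none 1 := by
  show ρ 1 _ = _
  rw [map_one]
  rfl

@[simp] lemma T_ch (i : Fin n) (ℓ : ℕ) :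
    T (ch K i ℓ) = Finsupp.single (some (i, ℓ)) 1 := by
  induction ℓ generalizing i with
  | zero =>
    show ρ (vt K i) _ = _
    rw [ρ_vt, Vend_single, one_smul]
    rfl
  | succ ℓ ih =>
    rw [ch_succ, T_mul, ih, ρ_ed, Eend_single, one_smul]
    simp [eAct]

end Stmt8
namespace Stmt8
variable {K : Type} [Field K] {n : ℕ} [NeZero n]

/-- the set of paths, as elements of the path algebra -/
noncomputable def chSet (K : Type) [Field K] (n : ℕ) [NeZero n] :
    Set ((cycGraph n).PA K) := Set.range fun p : Fin n × ℕ => ch K p.1 p.2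

lemma mul_mem_span_ch {x y : (cycGraph n).PA K}
    (hx : x ∈ Submodule.span K (chSet K n)) (hy : y ∈ Submodule.span K (chSet K n)) :
    x * y ∈ Submodule.span K (chSet K n) := by
  have h : Submodule.span K (chSet K n) * Submodule.span K (chSet K n) ≤
      Submodule.span K (chSet K n) := by
    rw [Submodule.span_mul_span]
    apply Submodule.span_le.mpr
    rintro - ⟨a, ⟨⟨i, ℓ⟩, rfl⟩, b, ⟨⟨j, m⟩, rfl⟩, rfl⟩
    simp only [SetLike.mem_coe]
    rw [ch_mul_ch]
    split_ifs
    · exact Submodule.subset_span ⟨(i, ℓ + m), rfl⟩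
    · exact zero_mem _
  exact h (Submodule.mul_mem_mul hx hy)

lemma span_ch_eq_KE :
    (Submodule.span K (chSet K n) : Set ((cycGraph n).PA K)) = (cycGraph n).KE K := by
  apply le_antisymm
  · intro x hx
    induction hx using Submodule.span_induction with
    | mem x h => obtain ⟨⟨i, ℓ⟩, rfl⟩ := h; exact ch_mem i ℓ
    | zero => exact zero_mem _
    | add x y _ _ hx hy => exact add_mem hx hy
    | smul k x _ hx => exact SMulMemClass.smul_mem k hx
  · have : ((cycGraph n).KE K : Set ((cycGraph n).PA K)) ⊆
        {x | x ∈ Submodule.span K (chSet K n)} := by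
      have hsub : NonUnitalAlgebra.adjoin K
          (Set.range ((cycGraph n).vtx K) ∪ Set.range ((cycGraph n).edg K)) ≤
          { carrier := {x | x ∈ Submodule.span K (chSet K n)}
            add_mem' := fun ha hb => by exact Submodule.add_mem (Submodule.span K (chSet K n)) ha hb
            zero_mem' := by exact zero_mem (Submodule.span K (chSet K n))
            mul_mem' := fun ha hb => by exact mul_mem_span_ch ha hb
            smul_mem' := fun k x hx => by
              exact Submodule.smul_mem (Submodule.span K (chSet K n)) k hx } := by
        apply NonUnitalAlgebra.adjoin_le
        rintro x (⟨u, rfl⟩ | ⟨e, rfl⟩)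
        · exact Submodule.subset_span ⟨(u, 0), rfl⟩
        · show ed K e ∈ _
          erw [← ch_one]
          exact Submodule.subset_span ⟨(e, 1), rfl⟩
      exact hsub
    exact this

/-- the inverse coordinate map -/
noncomputable def L : W K n →ₗ[K] (cycGraph n).PA K :=
  Finsupp.lsum ℕ fun o => LinearMap.toSpanSingleton K _
    (Option.rec 1 (fun p => ch K p.1 p.2) o)

@[simp] lemma L_single_none (k : K) :
    L (Finsupp.single (none : Option (Fin n × ℕ)) k) = k • 1 := by
  rw [L, Finsupp.lsum_single, LinearMap.toSpanSingleton_apply]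

@[simp] lemma L_single_some (p : Fin n × ℕ) (k : K) :
    L (Finsupp.single (some p) k) = k • ch K p.1 p.2 := by
  rw [L, Finsupp.lsum_single, LinearMap.toSpanSingleton_apply]

lemma span_top :
    Submodule.span K (insert (1 : (cycGraph n).PA K) (chSet K n)) = ⊤ := by
  rw [Submodule.eq_top_iff']
  intro x
  obtain ⟨y, rfl⟩ := RingQuot.mkAlgHom_surjective K ((cycGraph n).PathRel K) x
  induction y using FreeAlgebra.induction with
  | grade0 r =>
    rw [AlgHom.commutes]
    have : algebraMap K ((cycGraph n).PA K) r = r • 1 := by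
      rw [Algebra.smul_def, mul_one]
    rw [this]
    exact Submodule.smul_mem _ r (Submodule.subset_span (Set.mem_insert _ _))
  | grade1 g =>
    match g with
    | Sum.inl u =>
      apply Submodule.subset_span
      right
      exact ⟨(u, 0), rfl⟩
    | Sum.inr e =>
      apply Submodule.subset_span
      right
      refine ⟨(e, 1), ?_⟩
      show ch K e 1 = _
      erw [ch_one]
      rfl
  | mul a b ha hb =>
    rw [map_mul]
    set M := Submodule.span K (insert (1 : (cycGraph n).PA K) (chSet K n)) with hM
    have key : ∀ x y : (cycGraph n).PA K, x ∈ M → y ∈ M → x * y ∈ M := by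
      intro x y hx hy
      have h : M * M ≤ M := by
        rw [hM, Submodule.span_mul_span]
        apply Submodule.span_le.mpr
        rintro - ⟨a, ha, b, hb, rfl⟩
        rcases Set.mem_insert_iff.mp ha with rfl | ⟨⟨i, ℓ⟩, rfl⟩ <;>
          rcases Set.mem_insert_iff.mp hb with rfl | ⟨⟨j, m⟩, rfl⟩
        · show (1 : (cycGraph n).PA K) * 1 ∈ _
          rw [one_mul]; exact Submodule.subset_span (Set.mem_insert _ _)
        · show (1 : (cycGraph n).PA K) * ch K j m ∈ _
          rw [one_mul]
          exact Submodule.subset_span (Set.mem_insert_of_mem _ ⟨(j, m), rfl⟩)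
        · show ch K i ℓ * 1 ∈ _
          rw [mul_one]
          exact Submodule.subset_span (Set.mem_insert_of_mem _ ⟨(i, ℓ), rfl⟩)
        · show ch K i ℓ * ch K j m ∈ M
          rw [ch_mul_ch]
          split_ifs
          · exact Submodule.subset_span (Set.mem_insert_of_mem _ ⟨(i, ℓ + m), rfl⟩)
          · exact zero_mem _
      exact h (Submodule.mul_mem_mul hx hy)
    exact key _ _ ha hb
  | add a b ha hb =>
    rw [map_add]
    exact add_mem ha hb

lemma L_T (x : (cycGraph n).PA K) : L (T x) = x := by
  have : L.comp T = LinearMap.id (R := K) (M := (cycGraph n).PA K) := by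
    apply LinearMap.ext_on (span_top (K := K) (n := n))
    rintro x (rfl | ⟨⟨i, ℓ⟩, rfl⟩)
    · simp
    · simp
  exact congrFun (congrArg (fun f => f.toFun) this) x

lemma T_inj : Function.Injective (T : (cycGraph n).PA K →ₗ[K] W K n) := by
  intro x y h
  rw [← L_T x, ← L_T y, h]

end Stmt8
namespace Stmt8
open Polynomial
variable {K : Type} [Field K] {n : ℕ} [NeZero n]

/-- `p(c_i)` in the corner at vertex `i` -/
noncomputable def Q (i : Fin n) (p : Polynomial K) : (cycGraph n).PA K :=
  vt K i * Polynomial.aeval (cycElem K n i) p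

lemma Q_monomial (i : Fin n) (m : ℕ) (a : K) :
    Q i (monomial m a) = a • ch K i (m * n) := by
  rw [Q, Polynomial.aeval_monomial, ← Algebra.smul_def, mul_smul_comm, vt_mul_cyc_pow]

lemma Q_add (i : Fin n) (p q : Polynomial K) : Q i (p + q) = Q i p + Q i q := by
  rw [Q, map_add, mul_add]; rfl

lemma Q_smul (i : Fin n) (k : K) (p : Polynomial K) : Q i (k • p) = k • Q i p := by
  rw [Q, map_smul, mul_smul_comm]; rfl

lemma vt_mul_Q (j i : Fin n) (p : Polynomial K) :
    vt K j * Q i p = if j = i then Q i p else 0 := by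
  rw [Q, ← mul_assoc, vt_mul_vt]
  split_ifs with h
  · rw [h]
  · rw [zero_mul]

lemma Q_mul_vt (i : Fin n) (p : Polynomial K) (j : Fin n) :
    Q i p * vt K j = if j = i then Q i p else 0 := by
  induction p using Polynomial.induction_on' with
  | add p q hp hq =>
    rw [Q_add, add_mul, hp, hq]
    split_ifs <;> simp
  | monomial m a =>
    rw [Q_monomial, smul_mul_assoc, ch_mul_vt, natCast_mul_self, add_zero]
    split_ifs with h
    · rfl
    · rw [smul_zero]

lemma Q_mul_Q (i : Fin n) (p : Polynomial K) (j : Fin n) (q : Polynomial K) :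
    Q i p * Q j q = if j = i then Q i (p * q) else 0 := by
  have h1 : Q i p * Q j q = (Q i p * vt K j) * Polynomial.aeval (cycElem K n j) q := by
    simp only [Q, mul_assoc]
  rw [h1, Q_mul_vt]
  split_ifs with h
  · subst h
    simp only [Q, mul_assoc, ← map_mul]
  · rw [zero_mul]

lemma ed_mul_cycpow (j : Fin n) (m : ℕ) :
    ed K j * cycElem K n (j + 1) ^ m = ch K j (m * n + 1) := by
  cases m with
  | zero => rw [pow_zero, mul_one, Nat.zero_mul, zero_add, ch_one]
  | succ m => rw [cyc_pow_succ, ed_mul_ch, if_pos rfl]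

lemma ed_mul_Q (j i : Fin n) (p : Polynomial K) :
    ed K j * Q i p = if i = j + 1 then ed K j * Polynomial.aeval (cycElem K n (j + 1)) p
      else 0 := by
  rw [Q, ← mul_assoc, ed_mul_vt]
  split_ifs with h
  · rw [h]
  · rw [zero_mul]

lemma Q_mul_ed (i : Fin n) (p : Polynomial K) (j : Fin n) :
    Q i p * ed K j = if j = i then ed K j * Polynomial.aeval (cycElem K n (j + 1)) p
      else 0 := by
  induction p using Polynomial.induction_on' with
  | add p q hp hq =>
    rw [Q_add, add_mul, hp, hq, map_add, mul_add]
    split_ifs <;> simp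
  | monomial m a =>
    rw [Q_monomial, smul_mul_assoc, ch_mul_ed, natCast_mul_self, add_zero]
    split_ifs with h
    · subst h
      rw [Polynomial.aeval_monomial, ← Algebra.smul_def, mul_smul_comm, ed_mul_cycpow]
    · rw [smul_zero]

/-- the map `p ↦ Σᵢ p(cᵢ)` -/
noncomputable def Phi (K : Type) [Field K] (n : ℕ) [NeZero n] (p : Polynomial K) :
    (cycGraph n).PA K := ∑ i : Fin n, Q i p

lemma Phi_formula (p : Polynomial K) :
    Phi K n p = ∑ i : Fin n,
      p.sum fun m a => a • ((cycGraph n).vtx K i * cycElem K n i ^ m) := by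
  apply Finset.sum_congr rfl
  intro i _
  rw [Q, Polynomial.aeval_def, Polynomial.eval₂_eq_sum, Polynomial.sum_def,
    Polynomial.sum_def, Finset.mul_sum]
  apply Finset.sum_congr rfl
  intro m _
  rw [← Algebra.smul_def, mul_smul_comm]
  rfl

lemma Phi_add (p q : Polynomial K) : Phi K n (p + q) = Phi K n p + Phi K n q := by
  rw [Phi, Phi, Phi, ← Finset.sum_add_distrib]
  exact Finset.sum_congr rfl fun i _ => Q_add i p q

lemma Phi_smul (k : K) (p : Polynomial K) : Phi K n (k • p) = k • Phi K n p := by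
  rw [Phi, Phi, Finset.smul_sum]
  exact Finset.sum_congr rfl fun i _ => Q_smul i k p

lemma Phi_mul (p q : Polynomial K) : Phi K n (p * q) = Phi K n p * Phi K n q := by
  rw [Phi, Phi, Phi, Finset.sum_mul_sum]
  symm
  calc ∑ i : Fin n, ∑ j : Fin n, Q i p * Q j q
      = ∑ i : Fin n, ∑ j : Fin n, if j = i then Q i (p * q) else 0 :=
        Finset.sum_congr rfl fun i _ => Finset.sum_congr rfl fun j _ => Q_mul_Q i p j q
    _ = ∑ i : Fin n, Q i (p * q) := by
        apply Finset.sum_congr rfl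
        intro i _
        simp
end Stmt8
namespace Stmt8
open Polynomial
variable {K : Type} [Field K] {n : ℕ} [NeZero n]

lemma Q_mem_KE (i : Fin n) (p : Polynomial K) : Q i p ∈ (cycGraph n).KE K := by
  induction p using Polynomial.induction_on' with
  | add p q hp hq => rw [Q_add]; exact add_mem hp hq
  | monomial m a => rw [Q_monomial]; exact SMulMemClass.smul_mem a (ch_mem i (m * n))

lemma Phi_mem_KE (p : Polynomial K) : Phi K n p ∈ (cycGraph n).KE K :=
  sum_mem fun i _ => Q_mem_KE i p

lemma vt_commute (j : Fin n) (p : Polynomial K) :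
    vt K j * Phi K n p = Phi K n p * vt K j := by
  rw [Phi, Finset.mul_sum, Finset.sum_mul]
  apply Finset.sum_congr rfl
  intro i _
  rw [vt_mul_Q, Q_mul_vt]

lemma ed_commute (j : Fin n) (p : Polynomial K) :
    ed K j * Phi K n p = Phi K n p * ed K j := by
  rw [Phi, Finset.mul_sum, Finset.sum_mul]
  have h1 : ∀ i : Fin n, ed K j * Q i p =
      if i = j + 1 then ed K j * Polynomial.aeval (cycElem K n (j + 1)) p else 0 :=
    fun i => ed_mul_Q j i p
  have h2 : ∀ i : Fin n, Q i p * ed K j =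
      if j = i then ed K j * Polynomial.aeval (cycElem K n (j + 1)) p else 0 :=
    fun i => Q_mul_ed i p j
  rw [Finset.sum_congr rfl fun i _ => h1 i, Finset.sum_congr rfl fun i _ => h2 i]
  rw [Finset.sum_ite_eq' Finset.univ (j + 1)
      (fun _ => ed K j * Polynomial.aeval (cycElem K n (j + 1)) p),
    Finset.sum_ite_eq Finset.univ j
      (fun _ => ed K j * Polynomial.aeval (cycElem K n (j + 1)) p)]
  simp

lemma Phi_central (p : Polynomial K) : Phi K n p ∈ (cycGraph n).relCenter K := by
  refine ⟨Phi_mem_KE p, ?_⟩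
  intro a ha
  have hsub : (cycGraph n).KE K ≤ NonUnitalSubalgebra.centralizer K {Phi K n p} := by
    apply NonUnitalAlgebra.adjoin_le
    rintro x (⟨u, rfl⟩ | ⟨e, rfl⟩) <;>
      rw [SetLike.mem_coe, NonUnitalSubalgebra.mem_centralizer_iff] <;>
      rintro g rfl
    · exact (vt_commute u p).symm
    · exact (ed_commute e p).symm
  have := (NonUnitalSubalgebra.mem_centralizer_iff (R := K)).mp (hsub ha) (Phi K n p) rfl
  exact this.symm

lemma T_Phi_some (p : Polynomial K) (i : Fin n) (ℓ : ℕ) :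
    T (Phi K n p) (some (i, ℓ)) = if n ∣ ℓ then p.coeff (ℓ / n) else 0 := by
  induction p using Polynomial.induction_on' with
  | add p q hp hq =>
    rw [Phi_add, map_add, Finsupp.add_apply, hp, hq, Polynomial.coeff_add]
    split_ifs <;> ring
  | monomial m a =>
    have hT : T (Phi K n (monomial m a)) =
        ∑ i' : Fin n, Finsupp.single (some (i', m * n)) a := by
      rw [Phi, map_sum]
      apply Finset.sum_congr rfl
      intro i' _
      rw [Q_monomial, map_smul, T_ch, Finsupp.smul_single', mul_one]
    rw [hT, Finsupp.finset_sum_apply]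
    by_cases hℓ : ℓ = m * n
    · subst hℓ
      have hd : n ∣ m * n := dvd_mul_left n m
      have hq : m * n / n = m := Nat.mul_div_cancel m (Nat.pos_of_ne_zero (NeZero.ne n))
      rw [if_pos hd, hq, Polynomial.coeff_monomial, if_pos rfl]
      have : ∀ i' : Fin n,
          (Finsupp.single (some (i', m * n)) a : W K n) (some (i, m * n)) =
          if i' = i then a else 0 := by
        intro i'
        rw [Finsupp.single_apply]
        by_cases h : i' = i
        · subst h; rw [if_pos rfl, if_pos rfl]
        · rw [if_neg h, if_neg]
          intro h1
          injection h1 with h3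
          exact h (Prod.ext_iff.mp h3).1
      rw [Finset.sum_congr rfl fun i' _ => this i']
      simp
    · have hz : ∀ i' : Fin n,
          (Finsupp.single (some (i', m * n)) a : W K n) (some (i, ℓ)) = 0 := by
        intro i'
        apply Finsupp.single_eq_of_ne
        intro h
        injection h with h3
        exact hℓ ((Prod.ext_iff.mp h3).2)
      rw [Finset.sum_congr rfl fun i' _ => hz i', Finset.sum_const_zero]
      split_ifs with hd
      · rw [Polynomial.coeff_monomial, if_neg]
        intro hm
        exact hℓ (by rw [hm]; exact (Nat.div_mul_cancel hd).symm)
      · rfl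

lemma T_Phi_none (p : Polynomial K) : T (Phi K n p) none = 0 := by
  induction p using Polynomial.induction_on' with
  | add p q hp hq => rw [Phi_add, map_add, Finsupp.add_apply, hp, hq, add_zero]
  | monomial m a =>
    rw [Phi, map_sum, Finsupp.finset_sum_apply]
    apply Finset.sum_eq_zero
    intro i' _
    rw [Q_monomial, map_smul, T_ch, Finsupp.smul_single', mul_one]
    exact Finsupp.single_eq_of_ne (by simp)

lemma Phi_inj : Function.Injective (Phi K n) := by
  intro p q h
  ext m
  have h1 := congrArg (fun w => T w (some ((0 : Fin n), m * n))) h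
  rw [T_Phi_some, T_Phi_some, if_pos (dvd_mul_left n m), if_pos (dvd_mul_left n m),
    Nat.mul_div_cancel m (Nat.pos_of_ne_zero (NeZero.ne n))] at h1
  exact h1

end Stmt8
namespace Stmt8
open Polynomial
variable {K : Type} [Field K] {n : ℕ} [NeZero n]

lemma T_comb (c : (Fin n × ℕ) →₀ K) :
    T (c.sum fun q k => k • ch K q.1 q.2) = Finsupp.mapDomain some c := by
  rw [map_finsuppSum, Finsupp.mapDomain]
  apply Finsupp.sum_congr
  intro q _
  rw [map_smul, T_ch, Finsupp.smul_single', mul_one]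

lemma central_in_range (z : (cycGraph n).PA K) (hz : z ∈ (cycGraph n).relCenter K) :
    ∃ p : Polynomial K, Phi K n p = z := by
  obtain ⟨hKE, hcomm⟩ := hz
  have hspan : z ∈ Submodule.span K (Set.range fun p : Fin n × ℕ => ch K p.1 p.2) := by
    show z ∈ (Submodule.span K (chSet K n) : Set _)
    rw [span_ch_eq_KE]
    exact hKE
  obtain ⟨c, hc⟩ := Finsupp.mem_span_range_iff_exists_finsupp.mp hspan
  have hTz : T z = Finsupp.mapDomain some c := by rw [← hc]; exact T_comb c
  -- vertex relations kill coefficients of non-closed paths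
  have claim1 : ∀ (i : Fin n) (ℓ : ℕ), ((ℓ : Fin n) ≠ 0) → c (i, ℓ) = 0 := by
    intro i ℓ hℓ
    have hv := hcomm (vt K i) vt_mem
    have e2 : T (vt K i * z) = c.sum fun q k =>
        if i = q.1 then Finsupp.single (some q) k else 0 := by
      rw [← hc, Finsupp.mul_sum, map_finsuppSum]
      apply Finsupp.sum_congr
      intro q _
      rw [mul_smul_comm, vt_mul_ch]
      split_ifs with h
      · rw [map_smul, T_ch, Finsupp.smul_single', mul_one]
      · rw [smul_zero, map_zero]
    have e3 : T (vt K i * z) (some (i, ℓ)) = c (i, ℓ) := by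
      rw [e2, Finsupp.sum_apply]
      refine (Finsupp.sum_eq_single (i, ℓ) ?_ ?_).trans ?_
      · intro q hq hne
        split_ifs with h
        · exact Finsupp.single_eq_of_ne fun he => hne (Option.some_injective _ he).symm
        · rfl
      · intro _
        split_ifs <;> simp
      · rw [if_pos rfl, Finsupp.single_eq_same]
    have e2' : T (z * vt K i) = c.sum fun q k =>
        if i = q.1 + (q.2 : Fin n) then Finsupp.single (some q) k else 0 := by
      rw [← hc, Finsupp.sum_mul, map_finsuppSum]
      apply Finsupp.sum_congr
      intro q _
      rw [smul_mul_assoc, ch_mul_vt]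
      split_ifs with h
      · rw [map_smul, T_ch, Finsupp.smul_single', mul_one]
      · rw [smul_zero, map_zero]
    have e3' : T (z * vt K i) (some (i, ℓ)) =
        if i = i + (ℓ : Fin n) then c (i, ℓ) else 0 := by
      rw [e2', Finsupp.sum_apply]
      refine (Finsupp.sum_eq_single (i, ℓ) ?_ ?_).trans ?_
      · intro q hq hne
        split_ifs with h
        · exact Finsupp.single_eq_of_ne fun he => hne (Option.some_injective _ he).symm
        · rfl
      · intro _
        split_ifs <;> simp
      · split_ifs with h
        · rw [Finsupp.single_eq_same]
        · rfl
    have e3'' : T (vt K i * z) (some (i, ℓ)) =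
        if i = i + (ℓ : Fin n) then c (i, ℓ) else 0 := by
      rw [hv]; exact e3'
    have hkey := e3.symm.trans e3''
    rw [if_neg fun h => hℓ (left_eq_add.mp h)] at hkey
    exact hkey
  -- edge relations give rotation invariance
  have claim2 : ∀ (j : Fin n) (m : ℕ), ((m : Fin n) = 0) → c (j + 1, m) = c (j, m) := by
    intro j m hm
    have hv := hcomm (ed K j) ed_mem
    have f2 : T (ed K j * z) = c.sum fun q k =>
        if q.1 = j + 1 then Finsupp.single (some (j, q.2 + 1)) k else 0 := by
      rw [← hc, Finsupp.mul_sum, map_finsuppSum]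
      apply Finsupp.sum_congr
      intro q _
      rw [mul_smul_comm, ed_mul_ch]
      split_ifs with h
      · rw [map_smul, T_ch, Finsupp.smul_single', mul_one]
      · rw [smul_zero, map_zero]
    have f3 : T (ed K j * z) (some (j, m + 1)) = c (j + 1, m) := by
      rw [f2, Finsupp.sum_apply]
      refine (Finsupp.sum_eq_single (j + 1, m) ?_ ?_).trans ?_
      · intro q hq hne
        split_ifs with h
        · apply Finsupp.single_eq_of_ne
          intro he
          injection he with he'
          apply hne
          have h2 : q.2 = m := by
            have h3 := (Prod.ext_iff.mp he').2
            omega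
          exact Prod.ext_iff.mpr ⟨h, h2⟩
        · rfl
      · intro _
        split_ifs <;> simp
      · rw [if_pos rfl, Finsupp.single_eq_same]
    have g2 : T (z * ed K j) = c.sum fun q k =>
        if j = q.1 + (q.2 : Fin n) then Finsupp.single (some (q.1, q.2 + 1)) k else 0 := by
      rw [← hc, Finsupp.sum_mul, map_finsuppSum]
      apply Finsupp.sum_congr
      intro q _
      rw [smul_mul_assoc, ch_mul_ed]
      split_ifs with h
      · rw [map_smul, T_ch, Finsupp.smul_single', mul_one]
      · rw [smul_zero, map_zero]
    have g3 : T (z * ed K j) (some (j, m + 1)) =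
        if j = j + (m : Fin n) then c (j, m) else 0 := by
      rw [g2, Finsupp.sum_apply]
      refine (Finsupp.sum_eq_single (j, m) ?_ ?_).trans ?_
      · intro q hq hne
        split_ifs with h
        · apply Finsupp.single_eq_of_ne
          intro he
          injection he with he'
          apply hne
          have h1 := (Prod.ext_iff.mp he').1
          have h2 : q.2 = m := by
            have h3 := (Prod.ext_iff.mp he').2
            omega
          exact Prod.ext_iff.mpr ⟨h1.symm, h2⟩
        · rfl
      · intro _
        split_ifs <;> simp
      · split_ifs with h
        · rw [Finsupp.single_eq_same]
        · rfl
    have g3' : T (ed K j * z) (some (j, m + 1)) =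
        if j = j + (m : Fin n) then c (j, m) else 0 := by
      rw [hv]; exact g3
    have heq := f3.symm.trans g3'
    rw [hm, add_zero, if_pos rfl] at heq
    exact heq
  have claim3 : ∀ (m : ℕ), ((m : Fin n) = 0) → ∀ (i : Fin n), c (i, m) = c (0, m) := by
    intro m hm
    have key : ∀ k : ℕ, c ((k : ℕ) , m) = c (0, m) := by
      intro k
      induction k with
      | zero => rw [Nat.cast_zero]
      | succ k ih =>
        have hcast : ((k + 1 : ℕ) : Fin n) = ((k : ℕ) : Fin n) + 1 := by push_cast; ring
        rw [hcast, claim2 _ m hm, ih]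
    intro i
    have hkey := key (i : ℕ)
    rwa [Fin.cast_val_eq_self] at hkey
  -- construct the polynomial
  have hninj : Function.Injective (fun m : ℕ => ((0 : Fin n), m * n)) := by
    intro a b hab
    simp only [Prod.mk.injEq, true_and] at hab
    exact Nat.eq_of_mul_eq_mul_right (Nat.pos_of_ne_zero (NeZero.ne n)) hab
  refine ⟨⟨⟨Finsupp.comapDomain (fun m : ℕ => ((0 : Fin n), m * n)) c hninj.injOn⟩⟩, ?_⟩
  apply T_inj
  apply Finsupp.ext
  intro o
  match o with
  | none =>
    rw [T_Phi_none, hTz]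
    exact (Finsupp.mapDomain_notin_range _ _ (by simp)).symm
  | some (i, ℓ) =>
    rw [T_Phi_some, hTz, Finsupp.mapDomain_apply (Option.some_injective _)]
    by_cases hdvd : n ∣ ℓ
    · rw [if_pos hdvd, Polynomial.coeff_ofFinsupp, AddMonoidAlgebra.coeff_ofCoeff, Finsupp.comapDomain_apply,
        Nat.div_mul_cancel hdvd]
      exact (claim3 ℓ (Fin.natCast_eq_zero.mpr hdvd) i).symm
    · rw [if_neg hdvd]
      exact (claim1 i ℓ fun h0 => hdvd (Fin.natCast_eq_zero.mp h0)).symm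

end Stmt8
/-- For a cycle graph, `Z(KE) = { Σᵢ p(cᵢ) : p ∈ K[x] }` (where `p(cᵢ)` is
evaluated in the corner `uᵢ(KE)uᵢ`, with `cᵢ⁰ = uᵢ`), and `Σᵢ p(cᵢ) ↦ p` is a
`K`-algebra isomorphism `Z(KE) ≅ K[x]`. -/
theorem stmt8 (K : Type) [Field K] (n : ℕ) [NeZero n] :
    ∃ Φ : Polynomial K → (cycGraph n).PA K,
      (∀ p : Polynomial K, Φ p =
          ∑ i : Fin n, p.sum fun m a => a • ((cycGraph n).vtx K i * cycElem K n i ^ m)) ∧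
      Set.range Φ = (cycGraph n).relCenter K ∧
      Function.Injective Φ ∧
      (∀ p q, Φ (p + q) = Φ p + Φ q) ∧
      (∀ p q, Φ (p * q) = Φ p * Φ q) ∧
      (∀ (c : K) (p), Φ (c • p) = c • Φ p) := by
  refine ⟨Stmt8.Phi K n, fun p => Stmt8.Phi_formula p, ?_, Stmt8.Phi_inj,
    fun p q => Stmt8.Phi_add p q, fun p q => Stmt8.Phi_mul p q,
    fun c p => Stmt8.Phi_smul c p⟩
  apply Set.ext
  intro x
  constructor
  · rintro ⟨p, rfl⟩
    exact Stmt8.Phi_central p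
  · intro hx
    exact Stmt8.central_in_range x hx
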